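/- Let A ∈ ℝ^{k×n} have rank k and let X = {x ∈ ℝⁿ : Ax = 0} be its kernel, an (n−k)-dimensional subspace. Among all k-element subsets {i₁, …, i_k} ⊆ [n] of column indices, choose one maximizing |det(b_{i₁}, …, b_{i_k})| where b_i is the i-th column of A. Then this maximal determinant is nonzero, and for any choice of values in {−1,1} for the remaining n−k coordinates, there is a unique vector in X extending them, whose remaining k coordinates are all bounded in absolute value by n−k. -/

import Mathlib

open Matrix Finset

lemma det_updateColumn_finset_sum {k : ℕ} {ι : Type*} (B : Matrix (Fin k) (Fin k) ℝ)
    (i : Fin k) (S : Finset ι) (c : ι → ℝ) (u : ι → Fin k → ℝ) :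
    (B.updateCol i (fun r => ∑ j ∈ S, c j * u j r)).det
      = ∑ j ∈ S, c j * (B.updateCol i (u j)).det := by
  classical
  induction S using Finset.induction_on with
  | empty =>
      simp only [Finset.sum_empty]
      exact Matrix.det_eq_zero_of_column_eq_zero i (fun r => by simp [Matrix.updateCol_apply])
  | insert a S ha ih =>
      have : (fun r => ∑ j ∈ insert a S, c j * u j r)
          = (c a • u a) + fun r => ∑ j ∈ S, c j * u j r := by
        funext r; simp [Finset.sum_insert ha, Pi.add_apply]
      rw [this, Matrix.det_updateCol_add, Matrix.det_updateCol_smul,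
        Finset.sum_insert ha, ih]

theorem stmt18 (k n : ℕ) (hkn : k ≤ n) (A : Matrix (Fin k) (Fin n) ℝ)
    (hrank : A.rank = k)
    (I : Fin k → Fin n) (hI : Function.Injective I)
    (hmax : ∀ J : Fin k → Fin n, Function.Injective J →
      |(A.submatrix id J).det| ≤ |(A.submatrix id I).det|) :
    (A.submatrix id I).det ≠ 0 ∧
    ∀ v : Fin n → ℝ, (∀ i : Fin n, i ∉ Set.range I → v i = 1 ∨ v i = -1) →
      ∃ x : Fin n → ℝ,
        (A.mulVec x = 0 ∧ ∀ i : Fin n, i ∉ Set.range I → x i = v i) ∧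
        (∀ i ∈ Set.range I, |x i| ≤ (n : ℝ) - k) ∧
        ∀ x' : Fin n → ℝ, A.mulVec x' = 0 →
          (∀ i : Fin n, i ∉ Set.range I → x' i = v i) → x' = x := by
  classical
  set B := A.submatrix id I with hBdef
  -- Step 1: there exists J injective with nonzero minor
  have hspan : Submodule.span ℝ (Set.range Aᵀ) = ⊤ := by
    have h1 : LinearMap.range A.mulVecLin = ⊤ := by
      apply Submodule.eq_top_of_finrank_eq
      rw [← Matrix.rank, hrank]
      simp [Module.finrank_fintype_fun_eq_card]
    rw [show Aᵀ = A.col from rfl, ← Matrix.range_mulVecLin, h1]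
  obtain ⟨b, hbsub, hbspan, hbind⟩ := exists_linearIndependent ℝ (Set.range Aᵀ)
  rw [hspan] at hbspan
  have hbfin : b.Finite := Set.Finite.subset (Set.finite_range Aᵀ) hbsub
  haveI : Fintype b := hbfin.fintype
  have hbasis : Fintype.card b = k := by
    have h0 := Module.finrank_eq_card_basis (Module.Basis.mk hbind (by rw [Subtype.range_coe, hbspan]))
    rw [Module.finrank_fintype_fun_eq_card, Fintype.card_fin] at h0
    exact (Fintype.card_congr (Equiv.refl _)).trans h0.symm
  obtain ⟨e⟩ := Fintype.card_eq.mp (by rw [hbasis, Fintype.card_fin] : Fintype.card b = Fintype.card (Fin k))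
  have hpre : ∀ w : b, ∃ j : Fin n, Aᵀ j = (w : Fin k → ℝ) := fun w => hbsub w.2
  choose g hg using hpre
  have hginj : Function.Injective g := by
    intro w₁ w₂ h
    apply Subtype.ext
    rw [← hg w₁, ← hg w₂, h]
  set J : Fin k → Fin n := g ∘ e.symm with hJ
  have hJinj : Function.Injective J := hginj.comp e.symm.injective
  have hdetJ : (A.submatrix id J).det ≠ 0 := by
    have hind : LinearIndependent ℝ (fun i : Fin k => (A.submatrix id J)ᵀ i) := by
      have : (fun i : Fin k => (A.submatrix id J)ᵀ i) = fun i => ((e.symm i : b) : Fin k → ℝ) := by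
        funext i
        rw [← hg (e.symm i)]
        rfl
      rw [this]
      exact hbind.comp e.symm e.symm.injective
    exact (Matrix.isUnit_iff_isUnit_det _).mp
      ((Matrix.linearIndependent_cols_iff_isUnit).mp hind) |>.ne_zero
  have hBdet : B.det ≠ 0 := by
    intro h
    have := hmax J hJinj
    rw [h, abs_zero] at this
    exact hdetJ (abs_eq_zero.mp (le_antisymm this (abs_nonneg _)))
  refine ⟨hBdet, ?_⟩
  intro v hv
  -- setup
  set T : Finset (Fin n) := (Finset.image I Finset.univ)ᶜ with hT
  have hTmem : ∀ j : Fin n, j ∈ T ↔ j ∉ Set.range I := by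
    intro j
    simp [hT, Set.mem_range, eq_comm]
  have hTcard : T.card = n - k := by
    rw [hT, Finset.card_compl, Finset.card_image_of_injective _ hI]
    simp
  set c : Fin k → ℝ := fun r => -∑ j ∈ T, v j * A r j with hc
  set y : Fin k → ℝ := B.det⁻¹ • Matrix.cramer B c with hy
  have hBy : B.mulVec y = c := by
    rw [hy, Matrix.mulVec_smul, Matrix.mulVec_cramer]
    funext r
    simp only [Pi.smul_apply, smul_eq_mul]
    rw [← mul_assoc, inv_mul_cancel₀ hBdet, one_mul]
  -- bound on y
  have hybound : ∀ i : Fin k, |y i| ≤ (n : ℝ) - k := by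
    intro i
    have hcs : c = fun r => ∑ j ∈ T, (-(v j)) * A r j := by
      funext r
      show -∑ j ∈ T, v j * A r j = _
      rw [← Finset.sum_neg_distrib]
      exact Finset.sum_congr rfl fun j _ => by ring
    have hlin : (B.updateCol i c).det
        = ∑ j ∈ T, (-(v j)) * (B.updateCol i (fun r => A r j)).det := by
      rw [hcs]
      exact det_updateColumn_finset_sum B i T (fun j => -(v j)) (fun j r => A r j)
    have hterm : ∀ j ∈ T, |(B.updateCol i (fun r => A r j)).det| ≤ |B.det| := by
      intro j hj
      have hjnotin : j ∉ Set.range I := (hTmem j).mp hj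
      have hupd : B.updateCol i (fun r => A r j) = A.submatrix id (Function.update I i j) := by
        funext r s
        by_cases hs : s = i
        · subst hs; simp [Matrix.updateCol_apply, Matrix.submatrix_apply]
        · simp [Matrix.updateCol_apply, hs, Function.update_of_ne hs, hBdef]
      have hupdinj : Function.Injective (Function.update I i j) := by
        intro s t h
        by_cases hs : s = i <;> by_cases ht : t = i
        · rw [hs, ht]
        · rw [hs] at h; simp [Function.update_of_ne ht, Function.update_self] at h
          exact absurd ⟨t, h.symm⟩ hjnotin
        · rw [ht] at h; simp [Function.update_of_ne hs, Function.update_self] at h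
          exact absurd ⟨s, h⟩ hjnotin
        · rw [Function.update_of_ne hs, Function.update_of_ne ht] at h
          exact hI h
      rw [hupd]
      exact hmax _ hupdinj
    have hvabs : ∀ j ∈ T, |v j| = 1 := by
      intro j hj
      rcases hv j ((hTmem j).mp hj) with h | h <;> simp [h]
    have habs : |(B.updateCol i c).det| ≤ (T.card : ℝ) * |B.det| := by
      rw [hlin]
      calc |∑ j ∈ T, (-(v j)) * (B.updateCol i (fun r => A r j)).det|
          ≤ ∑ j ∈ T, |(-(v j)) * (B.updateCol i (fun r => A r j)).det| :=
            Finset.abs_sum_le_sum_abs _ _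
        _ ≤ ∑ j ∈ T, |B.det| := by
            apply Finset.sum_le_sum
            intro j hj
            rw [abs_mul, abs_neg, hvabs j hj, one_mul]
            exact hterm j hj
        _ = (T.card : ℝ) * |B.det| := by rw [Finset.sum_const, nsmul_eq_mul]
    have hyi : y i = B.det⁻¹ * (B.updateCol i c).det := by
      rw [hy]; simp [Matrix.cramer_apply]
    rw [hyi, abs_mul, abs_inv]
    have hBpos : 0 < |B.det| := abs_pos.mpr hBdet
    have : |B.det|⁻¹ * |(B.updateCol i c).det| ≤ |B.det|⁻¹ * ((T.card : ℝ) * |B.det|) := by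
      apply mul_le_mul_of_nonneg_left habs (by positivity)
    calc |B.det|⁻¹ * |(B.updateCol i c).det|
        ≤ |B.det|⁻¹ * ((T.card : ℝ) * |B.det|) := this
      _ = (T.card : ℝ) := by field_simp
      _ = (n : ℝ) - k := by
          rw [hTcard]
          push_cast [Nat.cast_sub hkn]
          ring
  -- define x
  set x : Fin n → ℝ := fun j => if h : ∃ i', I i' = j then y (Classical.choose h) else v j with hx
  have hxI : ∀ i' : Fin k, x (I i') = y i' := by
    intro i'
    have h : ∃ i'', I i'' = I i' := ⟨i', rfl⟩
    rw [hx]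
    simp only [dif_pos h]
    congr 1
    exact hI (Classical.choose_spec h)
  have hxout : ∀ j : Fin n, j ∉ Set.range I → x j = v j := by
    intro j hj
    rw [hx]
    have : ¬∃ i', I i' = j := fun ⟨i', h⟩ => hj ⟨i', h⟩
    simp [this]
  -- key sum computation
  have hsum : ∀ z : Fin n → ℝ, (∀ j ∉ Set.range I, z j = v j) →
      A.mulVec z = B.mulVec (z ∘ I) - c := by
    intro z hz
    funext r
    have hsplit : Finset.univ = (Finset.image I Finset.univ) ∪ T := by
      rw [hT, Finset.union_compl]
    rw [Matrix.mulVec, dotProduct]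
    rw [hsplit, Finset.sum_union (disjoint_compl_right)]
    have h1 : ∑ j ∈ Finset.image I Finset.univ, A r j * z j = (B.mulVec (z ∘ I)) r := by
      rw [Finset.sum_image (fun a _ b _ h => hI h)]
      rw [Matrix.mulVec, dotProduct]
      rfl
    have h2 : ∑ j ∈ T, A r j * z j = -c r := by
      rw [hc]
      simp only [neg_neg]
      apply Finset.sum_congr rfl
      intro j hj
      rw [hz j ((hTmem j).mp hj)]
      ring
    rw [h1, h2]
    simp [sub_eq_add_neg]
  have hxker : A.mulVec x = 0 := by
    rw [hsum x hxout]
    have : x ∘ I = y := funext hxI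
    rw [this, hBy, sub_self]
  refine ⟨x, ⟨hxker, hxout⟩, ?_, ?_⟩
  · rintro j ⟨i', rfl⟩
    rw [hxI i']
    exact hybound i'
  · intro x' hx'ker hx'out
    have h1 : B.mulVec (x' ∘ I) - c = 0 := by rw [← hsum x' hx'out, hx'ker]
    have h2 : B.mulVec (x' ∘ I) = B.mulVec y := by
      rw [hBy]
      exact sub_eq_zero.mp h1
    have hinj : Function.Injective B.mulVec :=
      Matrix.mulVec_injective_iff_isUnit.mpr
        ((Matrix.isUnit_iff_isUnit_det _).mpr (isUnit_iff_ne_zero.mpr hBdet))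
    have h3 : x' ∘ I = y := hinj h2
    funext j
    by_cases hj : j ∈ Set.range I
    · obtain ⟨i', rfl⟩ := hj
      rw [hxI i']
      exact congrFun h3 i'
    · rw [hxout j hj, hx'out j hj]
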